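/- arXiv:1501.03436 — 4 statements merged into one kernel-verified Lean document; each statement's English description precedes it below -/
import Mathlib

section
/- Let G be a connected finite simple graph on at least two vertices, let H be a connected finite simple graph, and let H' be a connected subgraph of H on at least two vertices with diameter D_{H'} (taken with respect to the shortest-path metric of H'). Then λ(G, H) ≤ D_{H'}² · λ(G, H'). -/
open scoped Classical
open Finset

/-- Degree of a vertex in a finite simple graph. -/
noncomputable def gdeg {V : Type*} [Fintype V] (G : SimpleGraph V) (v : V) : ℕ :=
  (G.neighborSet v).ncard

/-- The volume of a finite simple graph: the sum of the degrees of all vertices. -/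
noncomputable def gvol {V : Type*} [Fintype V] (G : SimpleGraph V) : ℕ :=
  ∑ v, gdeg G v

/-- The Rayleigh-type quotient `R_f(G, X)` for an embedding `f : V(G) → X` where `X`
carries a distance function `d`.  The sum over ordered pairs of adjacent vertices divided
by `2` is the sum over edges of `G`; the sum over ordered pairs of distinct vertices divided
by `2` is the sum over unordered pairs of distinct vertices of `G`. -/
noncomputable def Rf {V X : Type*} [Fintype V] (G : SimpleGraph V) (d : X → X → ℝ)
    (f : V → X) : ℝ :=
  ((gvol G : ℝ) * ((∑ u, ∑ v, if G.Adj u v then d (f u) (f v) ^ 2 else 0) / 2)) /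
    ((∑ u, ∑ v, if u ≠ v then d (f u) (f v) ^ 2 * (gdeg G u : ℝ) * (gdeg G v : ℝ) else 0) / 2)

/-- `lam G d` is `λ(G, X)`: the infimum of `R_f(G, X)` over nonconstant `f : V(G) → X`. -/
noncomputable def lam {V X : Type*} [Fintype V] (G : SimpleGraph V) (d : X → X → ℝ) : ℝ :=
  sInf {r | ∃ f : V → X, (∃ u v, f u ≠ f v) ∧ r = Rf G d f}

/-- The diameter of a finite simple graph: the maximum shortest-path distance over pairs. -/
noncomputable def gDiam {V : Type*} [Fintype V] (H : SimpleGraph V) : ℕ :=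
  Finset.univ.sup fun p : V × V => H.dist p.1 p.2

/-- The maximum degree of a finite simple graph. -/
noncomputable def gMaxDeg {V : Type*} [Fintype V] (G : SimpleGraph V) : ℕ :=
  Finset.univ.sup (gdeg G)

/-- The minimum degree of a finite simple graph. -/
noncomputable def gMinDeg {V : Type*} [Fintype V] (G : SimpleGraph V) : ℕ :=
  sInf (Set.range (gdeg G))

section aux

variable {V W : Type*} [Fintype V] [Fintype W]

lemma gdeg_eq_degree (G : SimpleGraph V) [DecidableRel G.Adj] (v : V) :
    gdeg G v = G.degree v := by
  rw [gdeg, Set.ncard_eq_toFinset_card', SimpleGraph.degree, SimpleGraph.neighborFinset_def]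

lemma gdeg_pos (G : SimpleGraph V) (hG : G.Connected) (hV : 2 ≤ Fintype.card V) (v : V) :
    0 < gdeg G v := by
  classical
  rw [gdeg_eq_degree, SimpleGraph.degree_pos_iff_exists_adj]
  obtain ⟨w, hw⟩ := Fintype.exists_ne_of_one_lt_card (by omega) v
  obtain ⟨p⟩ := hG v w
  cases p with
  | nil => exact absurd rfl (Ne.symm hw)
  | cons h q => exact ⟨_, h⟩

end aux

theorem stmt_12' {V W : Type*} [Fintype V] [Fintype W]
    (G : SimpleGraph V) (hG : G.Connected) (hV : 2 ≤ Fintype.card V)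
    (H : SimpleGraph W) (hH : H.Connected)
    (H' : H.Subgraph) [Fintype H'.verts]
    (hH' : H'.coe.Connected) (hcard : 2 ≤ Fintype.card H'.verts) :
    lam G (fun i j => (H.dist i j : ℝ)) ≤
      (gDiam H'.coe : ℝ) ^ 2 * lam G (fun i j : H'.verts => (H'.coe.dist i j : ℝ)) := by
  classical
  set dH : W → W → ℝ := fun i j => (H.dist i j : ℝ) with hdHdef
  set dH' : H'.verts → H'.verts → ℝ := fun i j => (H'.coe.dist i j : ℝ) with hdH'def
  set D : ℝ := (gDiam H'.coe : ℝ) with hDdef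
  have hdegpos : ∀ v : V, 0 < (gdeg G v : ℝ) := fun v => by
    exact_mod_cast gdeg_pos G hG hV v
  have hD1 : 1 ≤ gDiam H'.coe := by
    obtain ⟨a, b, hab⟩ := Fintype.one_lt_card_iff.mp
      (show 1 < Fintype.card H'.verts by omega)
    calc 1 ≤ H'.coe.dist a b := hH'.pos_dist_of_ne hab
    _ ≤ _ := Finset.le_sup (f := fun p : H'.verts × H'.verts => H'.coe.dist p.1 p.2)
        (Finset.mem_univ (a, b))
  have hD1' : (1 : ℝ) ≤ D := by
    show (1 : ℝ) ≤ ((gDiam H'.coe : ℕ) : ℝ); exact_mod_cast hD1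
  have hDsq : (0 : ℝ) < D ^ 2 := by positivity
  have hdistle : ∀ a b : H'.verts, H.dist (a : W) (b : W) ≤ H'.coe.dist a b := by
    intro a b
    obtain ⟨p, hp⟩ := (hH'.preconnected a b).exists_walk_length_eq_dist
    calc H.dist (a : W) (b : W) ≤ (p.map H'.hom).length := SimpleGraph.dist_le _
    _ = p.length := SimpleGraph.Walk.length_map _ _
    _ = _ := hp
  have hdistD : ∀ a b : H'.verts, H'.coe.dist a b ≤ gDiam H'.coe := fun a b =>
    Finset.le_sup (f := fun p : H'.verts × H'.verts => H'.coe.dist p.1 p.2)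
      (Finset.mem_univ (a, b))
  -- key inequality
  have key : ∀ f : V → H'.verts, (∃ u v, f u ≠ f v) →
      Rf G dH (fun v => (f v : W)) ≤ D ^ 2 * Rf G dH' f := by
    rintro f ⟨u0, v0, hne0⟩
    set f' : V → W := fun v => (f v : W) with hf'def
    have hne0' : f' u0 ≠ f' v0 := fun h => hne0 (Subtype.coe_injective h)
    have huv0 : u0 ≠ v0 := fun h => hne0 (by rw [h])
    have hdHnn : ∀ u v : V, (0 : ℝ) ≤ dH (f' u) (f' v) := fun u v => Nat.cast_nonneg _
    have hdH'nn : ∀ u v : V, (0 : ℝ) ≤ dH' (f u) (f v) := fun u v => Nat.cast_nonneg _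
    set A : ℝ := ∑ u, ∑ v, if G.Adj u v then dH (f' u) (f' v) ^ 2 else 0 with hAdef
    set A' : ℝ := ∑ u, ∑ v, if G.Adj u v then dH' (f u) (f v) ^ 2 else 0 with hA'def
    set B : ℝ := ∑ u, ∑ v, if u ≠ v then
      dH (f' u) (f' v) ^ 2 * (gdeg G u : ℝ) * (gdeg G v : ℝ) else 0 with hBdef
    set B' : ℝ := ∑ u, ∑ v, if u ≠ v then
      dH' (f u) (f v) ^ 2 * (gdeg G u : ℝ) * (gdeg G v : ℝ) else 0 with hB'def
    have hAA' : A ≤ A' := by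
      refine Finset.sum_le_sum fun u _ => Finset.sum_le_sum fun v _ => ?_
      split
      · refine pow_le_pow_left₀ (hdHnn u v) ?_ 2
        exact Nat.cast_le.mpr (hdistle (f u) (f v))
      · exact le_refl 0
    have hA'nn : 0 ≤ A' := by
      refine Finset.sum_nonneg fun u _ => Finset.sum_nonneg fun v _ => ?_
      split
      · exact pow_nonneg (hdH'nn u v) 2
      · exact le_refl 0
    have hAnn : 0 ≤ A := by
      refine Finset.sum_nonneg fun u _ => Finset.sum_nonneg fun v _ => ?_
      split
      · exact pow_nonneg (hdHnn u v) 2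
      · exact le_refl 0
    have hdd : ∀ u v : V, dH' (f u) (f v) ≤ D * dH (f' u) (f' v) := by
      intro u v
      by_cases h : f u = f v
      · have h0 : dH' (f u) (f v) = 0 := by
          rw [h]
          show ((H'.coe.dist (f v) (f v) : ℕ) : ℝ) = 0
          rw [SimpleGraph.dist_self]; norm_num
        rw [h0]
        exact mul_nonneg (by linarith) (hdHnn u v)
      · have h1 : (1 : ℝ) ≤ dH (f' u) (f' v) := by
          show (1 : ℝ) ≤ ((H.dist (f' u) (f' v) : ℕ) : ℝ)
          exact_mod_cast hH.pos_dist_of_ne (fun hc => h (Subtype.coe_injective hc))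
        have h2 : dH' (f u) (f v) ≤ D := by
          show ((H'.coe.dist (f u) (f v) : ℕ) : ℝ) ≤ ((gDiam H'.coe : ℕ) : ℝ)
          exact Nat.cast_le.mpr (hdistD (f u) (f v))
        calc dH' (f u) (f v) ≤ D := h2
        _ = D * 1 := (mul_one D).symm
        _ ≤ D * dH (f' u) (f' v) := mul_le_mul_of_nonneg_left h1 (by linarith)
    have hB'B : B' ≤ D ^ 2 * B := by
      rw [hBdef, Finset.mul_sum]
      refine Finset.sum_le_sum fun u _ => ?_
      rw [Finset.mul_sum]
      refine Finset.sum_le_sum fun v _ => ?_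
      split
      · have hsq : dH' (f u) (f v) ^ 2 ≤ D ^ 2 * dH (f' u) (f' v) ^ 2 := by
          rw [← mul_pow]
          exact pow_le_pow_left₀ (hdH'nn u v) (hdd u v) 2
        have := mul_le_mul_of_nonneg_right (mul_le_mul_of_nonneg_right hsq
          (le_of_lt (hdegpos u))) (le_of_lt (hdegpos v))
        linarith [this]
      · simp
    have hBpos : 0 < B := by
      refine Finset.sum_pos' (fun u _ => Finset.sum_nonneg fun v _ => ?_)
        ⟨u0, Finset.mem_univ u0, ?_⟩
      · split
        · exact mul_nonneg (mul_nonneg (pow_nonneg (hdHnn u v) 2)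
            (Nat.cast_nonneg _)) (Nat.cast_nonneg _)
        · exact le_refl 0
      · refine Finset.sum_pos' (fun v _ => ?_) ⟨v0, Finset.mem_univ v0, ?_⟩
        · split
          · exact mul_nonneg (mul_nonneg (pow_nonneg (hdHnn u0 v) 2)
              (Nat.cast_nonneg _)) (Nat.cast_nonneg _)
          · exact le_refl 0
        · rw [if_pos huv0]
          have h1 : (0 : ℝ) < dH (f' u0) (f' v0) := by
            show (0 : ℝ) < ((H.dist (f' u0) (f' v0) : ℕ) : ℝ)
            exact_mod_cast hH.pos_dist_of_ne hne0'
          exact mul_pos (mul_pos (pow_pos h1 2) (hdegpos u0)) (hdegpos v0)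
    have hB'pos : 0 < B' := by
      refine Finset.sum_pos' (fun u _ => Finset.sum_nonneg fun v _ => ?_)
        ⟨u0, Finset.mem_univ u0, ?_⟩
      · split
        · exact mul_nonneg (mul_nonneg (pow_nonneg (hdH'nn u v) 2)
            (Nat.cast_nonneg _)) (Nat.cast_nonneg _)
        · exact le_refl 0
      · refine Finset.sum_pos' (fun v _ => ?_) ⟨v0, Finset.mem_univ v0, ?_⟩
        · split
          · exact mul_nonneg (mul_nonneg (pow_nonneg (hdH'nn u0 v) 2)
              (Nat.cast_nonneg _)) (Nat.cast_nonneg _)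
          · exact le_refl 0
        · rw [if_pos huv0]
          have h1 : (0 : ℝ) < dH' (f u0) (f v0) := by
            show (0 : ℝ) < ((H'.coe.dist (f u0) (f v0) : ℕ) : ℝ)
            exact_mod_cast hH'.pos_dist_of_ne hne0
          exact mul_pos (mul_pos (pow_pos h1 2) (hdegpos u0)) (hdegpos v0)
    have hRf1 : Rf G dH f' = ((gvol G : ℝ) * (A / 2)) / (B / 2) := rfl
    have hRf2 : Rf G dH' f = ((gvol G : ℝ) * (A' / 2)) / (B' / 2) := rfl
    rw [hRf1, hRf2]
    have hg : (0 : ℝ) ≤ (gvol G : ℝ) := Nat.cast_nonneg _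
    have hAB : A * B' ≤ A' * (D ^ 2 * B) :=
      mul_le_mul hAA' hB'B (le_of_lt hB'pos) hA'nn
    have key2 : (gvol G : ℝ) * (A / 2) * (B' / 2) ≤
        (D ^ 2 * ((gvol G : ℝ) * (A' / 2))) * (B / 2) := by
      nlinarith [mul_le_mul_of_nonneg_left hAB hg]
    calc (gvol G : ℝ) * (A / 2) / (B / 2)
        ≤ (D ^ 2 * ((gvol G : ℝ) * (A' / 2))) / (B' / 2) :=
          (div_le_div_iff₀ (by linarith) (by linarith)).mpr key2
    _ = D ^ 2 * ((gvol G : ℝ) * (A' / 2) / (B' / 2)) := by ring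
  -- assemble
  have hSbdd : BddBelow {r | ∃ f : V → W, (∃ u v, f u ≠ f v) ∧ r = Rf G dH f} := by
    refine ⟨0, ?_⟩
    rintro r ⟨f, -, rfl⟩
    have hnum : 0 ≤ (gvol G : ℝ) *
        ((∑ u, ∑ v, if G.Adj u v then dH (f u) (f v) ^ 2 else 0) / 2) := by
      have h1 : 0 ≤ ∑ u, ∑ v : V, if G.Adj u v then dH (f u) (f v) ^ 2 else 0 := by
        refine Finset.sum_nonneg fun u _ => Finset.sum_nonneg fun v _ => ?_
        split
        · exact pow_nonneg (Nat.cast_nonneg _) 2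
        · exact le_refl 0
      have hg : (0 : ℝ) ≤ (gvol G : ℝ) := Nat.cast_nonneg _
      exact mul_nonneg hg (by linarith)
    have hden : 0 ≤ (∑ u, ∑ v, if u ≠ v then
        dH (f u) (f v) ^ 2 * (gdeg G u : ℝ) * (gdeg G v : ℝ) else 0) / 2 := by
      have h1 : 0 ≤ ∑ u, ∑ v : V, if u ≠ v then
          dH (f u) (f v) ^ 2 * (gdeg G u : ℝ) * (gdeg G v : ℝ) else 0 := by
        refine Finset.sum_nonneg fun u _ => Finset.sum_nonneg fun v _ => ?_
        split
        · exact mul_nonneg (mul_nonneg (pow_nonneg (Nat.cast_nonneg _) 2)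
            (Nat.cast_nonneg _)) (Nat.cast_nonneg _)
        · exact le_refl 0
      linarith
    exact div_nonneg hnum hden
  have hS'ne : {r | ∃ f : V → H'.verts, (∃ u v, f u ≠ f v) ∧ r = Rf G dH' f}.Nonempty := by
    obtain ⟨a, b, hab⟩ := Fintype.one_lt_card_iff.mp
      (show 1 < Fintype.card H'.verts by omega)
    obtain ⟨x, y, hxy⟩ := Fintype.one_lt_card_iff.mp (show 1 < Fintype.card V by omega)
    refine ⟨_, (fun v => if v = x then a else b), ⟨x, y, ?_⟩, rfl⟩
    simp only [if_pos rfl, if_neg (Ne.symm hxy)]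
    exact hab
  have hmain : sInf {r | ∃ f : V → W, (∃ u v, f u ≠ f v) ∧ r = Rf G dH f} / D ^ 2 ≤
      sInf {r | ∃ f : V → H'.verts, (∃ u v, f u ≠ f v) ∧ r = Rf G dH' f} := by
    refine le_csInf hS'ne ?_
    rintro b ⟨f, hf, rfl⟩
    rw [div_le_iff₀ hDsq]
    obtain ⟨u, v, huv⟩ := hf
    calc sInf {r | ∃ f : V → W, (∃ u v, f u ≠ f v) ∧ r = Rf G dH f}
        ≤ Rf G dH (fun v => (f v : W)) := csInf_le hSbdd
          ⟨fun v => (f v : W), ⟨u, v, fun h => huv (Subtype.coe_injective h)⟩, rfl⟩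
    _ ≤ D ^ 2 * Rf G dH' f := key f ⟨u, v, huv⟩
    _ = Rf G dH' f * D ^ 2 := mul_comm _ _
  have h2 : lam G dH = sInf {r | ∃ f : V → W, (∃ u v, f u ≠ f v) ∧ r = Rf G dH f} := rfl
  have h3 : lam G dH' =
      sInf {r | ∃ f : V → H'.verts, (∃ u v, f u ≠ f v) ∧ r = Rf G dH' f} := rfl
  rw [h2, h3, mul_comm]
  exact (div_le_iff₀ hDsq).mp hmain

/-- For a connected finite simple graph `G` on at least two vertices, a
connected finite simple graph `H`, and a connected subgraph `H'` of `H` on at least two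
vertices with diameter `D_{H'}` (in the shortest-path metric of `H'`),
`λ(G, H) ≤ D_{H'}² · λ(G, H')`. -/
theorem stmt_12 {V W : Type*} [Fintype V] [Fintype W]
    (G : SimpleGraph V) (hG : G.Connected) (hV : 2 ≤ Fintype.card V)
    (H : SimpleGraph W) (hH : H.Connected)
    (H' : H.Subgraph) [Fintype H'.verts]
    (hH' : H'.coe.Connected) (hcard : 2 ≤ Fintype.card H'.verts) :
    lam G (fun i j => (H.dist i j : ℝ)) ≤
      (gDiam H'.coe : ℝ) ^ 2 * lam G (fun i j : H'.verts => (H'.coe.dist i j : ℝ)) :=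
  stmt_12' G hG hV H hH H' hH' hcard
end

section
/- Let G be a connected finite simple graph with vol(G) ≥ 6, let a, b be distinct nonadjacent vertices of G, and let G' be the graph obtained from G by adding the edge {a,b}. Let H be a connected finite simple graph on at least two vertices with diameter D_H. Then λ(G', H) ≤ (1 + 2/vol(G)) · (1 + D_H²) · λ(G, H), and λ(G', H) ≥ (1 + 2/vol(G)) · max{ (vol(G) − 1) / (vol(G) − 1 + D_H² · (2·vol(G) + 1)), 1/4 } · λ(G, H). -/
open scoped Classical
open Finset

section helpers

variable {V X : Type*} [Fintype V]

lemma aux_exists_adj_ne {G : SimpleGraph V} {f : V → X} :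
    ∀ {u v : V}, G.Walk u v → f u ≠ f v → ∃ x y, G.Adj x y ∧ f x ≠ f y := by
  intro u v p
  induction p with
  | nil => intro h; exact absurd rfl h
  | @cons u w v hadj p ih =>
    intro h
    by_cases hf : f u = f w
    · exact ih (fun hwv => h (hf.trans hwv))
    · exact ⟨u, w, hadj, hf⟩

lemma aux_two_terms_le {F : V → V → ℝ} (hF : ∀ u v, 0 ≤ F u v) {x y : V} (hxy : x ≠ y) :
    F x y + F y x ≤ ∑ u, ∑ v, F u v := by
  have h1 : ∀ u, ((if u = x then F x y else 0) + (if u = y then F y x else 0)) ≤ ∑ v, F u v := by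
    intro u
    by_cases hx : u = x
    · subst hx
      rw [if_pos rfl, if_neg hxy, add_zero]
      exact Finset.single_le_sum (fun v _ => hF u v) (Finset.mem_univ y)
    · rw [if_neg hx, zero_add]
      by_cases hy : u = y
      · subst hy
        rw [if_pos rfl]
        exact Finset.single_le_sum (fun v _ => hF u v) (Finset.mem_univ x)
      · rw [if_neg hy]
        exact Finset.sum_nonneg fun v _ => hF u v
  calc F x y + F y x
      = ∑ u, ((if u = x then F x y else 0) + (if u = y then F y x else 0)) := by
        rw [Finset.sum_add_distrib, Fintype.sum_ite_eq', Fintype.sum_ite_eq']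
    _ ≤ ∑ u, ∑ v, F u v := Finset.sum_le_sum fun u _ => h1 u

lemma aux_double_sum_pair (X : V → V → ℝ) (x y : V) :
    (∑ u, ∑ v, if u = x ∧ v = y then X u v else 0) = X x y := by
  have h : ∀ u, (∑ v, if u = x ∧ v = y then X u v else 0) = if u = x then X u y else 0 := by
    intro u
    by_cases hx : u = x <;> simp [hx, Fintype.sum_ite_eq']
  rw [Finset.sum_congr rfl fun u _ => h u, Fintype.sum_ite_eq']

lemma aux_dsumR (c : V → ℝ) (x : V) :
    (∑ u, ∑ v : V, if v = x then c u else 0) = ∑ u, c u := by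
  refine Finset.sum_congr rfl fun u _ => ?_
  simp [Fintype.sum_ite_eq']

lemma aux_dsumL (c : V → ℝ) (x : V) :
    (∑ u : V, ∑ v, if u = x then c v else 0) = ∑ v, c v := by
  rw [Finset.sum_comm]
  refine Finset.sum_congr rfl fun v _ => ?_
  simp [Fintype.sum_ite_eq']

lemma aux_halves (x s q : ℝ) (hq : q ≠ 0) : x * (s / 2) / (q / 2) = x * s / q := by
  field_simp

end helpers

set_option maxHeartbeats 3200000 in
/-- Let `G` be connected with `vol(G) ≥ 6`, let `a ≠ b` be nonadjacent
vertices of `G`, and let `G'` be `G` together with the edge `{a,b}`.  For any connected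
graph `H` on at least two vertices with diameter `D_H`,
`λ(G',H) ≤ (1 + 2/vol(G))(1 + D_H²) λ(G,H)` and
`λ(G',H) ≥ (1 + 2/vol(G)) · max{(vol(G)-1)/(vol(G)-1+D_H²(2 vol(G)+1)), 1/4} · λ(G,H)`. -/
theorem stmt_15 {V W : Type*} [Fintype V] [Fintype W]
    (G : SimpleGraph V) (hG : G.Connected) (hvol : 6 ≤ gvol G)
    (a b : V) (hab : a ≠ b) (hnadj : ¬ G.Adj a b)
    (G' : SimpleGraph V) (hG' : G' = G ⊔ SimpleGraph.fromEdgeSet {s(a, b)})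
    (H : SimpleGraph W) (hH : H.Connected) (hW : 2 ≤ Fintype.card W) :
    lam G' (fun i j => (H.dist i j : ℝ)) ≤
      (1 + 2 / (gvol G : ℝ)) * (1 + (gDiam H : ℝ) ^ 2) * lam G (fun i j => (H.dist i j : ℝ)) ∧
    lam G' (fun i j => (H.dist i j : ℝ)) ≥
      (1 + 2 / (gvol G : ℝ)) *
        max (((gvol G : ℝ) - 1) /
              ((gvol G : ℝ) - 1 + (gDiam H : ℝ) ^ 2 * (2 * (gvol G : ℝ) + 1))) (1 / 4) *
        lam G (fun i j => (H.dist i j : ℝ)) := by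
  subst hG'
  set G' : SimpleGraph V := G ⊔ SimpleGraph.fromEdgeSet {s(a, b)} with hG'
  clear_value G'
  set dd : W → W → ℝ := fun i j => (H.dist i j : ℝ) with hdd
  set volR : ℝ := (gvol G : ℝ) with hvolR
  set DR : ℝ := (gDiam H : ℝ) with hDRdef
  -- basic graph facts
  have hG'adj : ∀ u v, G'.Adj u v ↔
      (G.Adj u v ∨ ((u = a ∧ v = b) ∨ (u = b ∧ v = a))) := by
    intro u v
    rw [hG']
    simp only [SimpleGraph.sup_adj, SimpleGraph.fromEdgeSet_adj, Set.mem_singleton_iff,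
      Sym2.eq_iff]
    constructor
    · rintro (h | ⟨h, -⟩)
      · exact Or.inl h
      · exact Or.inr h
    · rintro (h | h)
      · exact Or.inl h
      · refine Or.inr ⟨h, ?_⟩
        rcases h with ⟨h1, h2⟩ | ⟨h1, h2⟩
        · exact h1 ▸ h2 ▸ hab
        · exact h1 ▸ h2 ▸ hab.symm
  have hdeg1 : ∀ v, 1 ≤ gdeg G v := by
    intro v
    have hw : ∃ w, w ≠ v := by
      by_cases hv : v = a
      · exact ⟨b, by simp [hv, hab.symm]⟩
      · exact ⟨a, fun h => hv h.symm⟩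
    obtain ⟨w, hw⟩ := hw
    have hne : (G.neighborSet v).Nonempty := by
      obtain ⟨p⟩ := hG.preconnected v w
      cases p with
      | nil => exact absurd rfl hw
      | cons h q => exact ⟨_, h⟩
    exact (Set.ncard_pos (Set.toFinite _)).mpr hne
  have hdegG' : ∀ v, gdeg G' v =
      gdeg G v + ((if v = a then 1 else 0) + (if v = b then 1 else 0)) := by
    intro v
    by_cases hva : v = a
    · rw [hva]
      have hset : G'.neighborSet a = insert b (G.neighborSet a) := by
        ext u
        simp only [SimpleGraph.mem_neighborSet, hG'adj, Set.mem_insert_iff]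
        have hF : ¬ (a = b) := hab
        tauto
      rw [gdeg, hset, Set.ncard_insert_of_notMem (by simpa using hnadj) (Set.toFinite _)]
      rw [if_pos rfl, if_neg hab]
      rfl
    · by_cases hvb : v = b
      · rw [hvb]
        have hset : G'.neighborSet b = insert a (G.neighborSet b) := by
          ext u
          simp only [SimpleGraph.mem_neighborSet, hG'adj, Set.mem_insert_iff]
          have hF : ¬ (b = a) := fun h => hab h.symm
          tauto
        rw [gdeg, hset,
          Set.ncard_insert_of_notMem (by simpa using fun h => hnadj h.symm) (Set.toFinite _)]
        rw [if_neg (fun h => hab h.symm : ¬ (b = a)), if_pos rfl]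
        rfl
      · have hset : G'.neighborSet v = G.neighborSet v := by
          ext u
          simp only [SimpleGraph.mem_neighborSet, hG'adj]
          have hF1 : ¬ (v = a) := hva
          have hF2 : ¬ (v = b) := hvb
          tauto
        rw [gdeg, hset, if_neg hva, if_neg hvb]
        rfl
  have hvol2 : gvol G' = gvol G + 2 := by
    unfold gvol
    rw [Finset.sum_congr rfl fun v _ => hdegG' v, Finset.sum_add_distrib,
      Finset.sum_add_distrib, Fintype.sum_ite_eq', Fintype.sum_ite_eq']
  -- real versions
  have dd_self : ∀ x, dd x x = 0 := fun x => by simp [hdd]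
  have dd_symm : ∀ x y, dd x y = dd y x := fun x y => by
    simp [hdd, SimpleGraph.dist_comm]
  have dd_nonneg : ∀ x y, 0 ≤ dd x y := fun x y => by
    simp [hdd]
  have dd_one : ∀ x y, x ≠ y → 1 ≤ dd x y := by
    intro x y h
    have h1 : 1 ≤ H.dist x y := hH.pos_dist_of_ne h
    simp only [hdd]
    exact_mod_cast h1
  have dd_le : ∀ x y, dd x y ≤ DR := by
    intro x y
    have h1 : H.dist x y ≤ gDiam H := by
      have h2 := Finset.le_sup (f := fun p : W × W => H.dist p.1 p.2) (Finset.mem_univ (x, y))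
      exact h2
    simp only [hdd, hDRdef]
    exact_mod_cast h1
  have hDR2 : (0:ℝ) ≤ DR ^ 2 := by positivity
  have hvolR6 : (6:ℝ) ≤ volR := by rw [hvolR]; exact_mod_cast hvol
  have hvolRpos : (0:ℝ) < volR := by linarith
  have hvolG' : ((gvol G' : ℝ)) = volR + 2 := by
    rw [hvol2, hvolR]; push_cast; ring
  have hdegR : ∀ v, (1:ℝ) ≤ (gdeg G v : ℝ) := fun v => by exact_mod_cast hdeg1 v
  have hdegR0 : ∀ v, (0:ℝ) ≤ (gdeg G v : ℝ) := fun v => Nat.cast_nonneg _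
  have hvolsum : volR = ∑ v, (gdeg G v : ℝ) := by
    rw [hvolR]; unfold gvol; push_cast; rfl
  have hdegR' : ∀ u, ((gdeg G' u : ℝ)) =
      (gdeg G u : ℝ) + ((if u = a then (1:ℝ) else 0) + (if u = b then (1:ℝ) else 0)) := by
    intro u
    rw [hdegG' u]
    by_cases h1 : u = a <;> by_cases h2 : u = b <;> simp [h1, h2] <;> push_cast <;> ring
  -- the key pointwise comparison
  have key : ∀ f : V → W, (∃ u v, f u ≠ f v) →
      (Rf G' dd f ≤ (1 + 2 / volR) * (1 + DR ^ 2) * Rf G dd f) ∧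
      ((1 + 2 / volR) * ((volR - 1) / (volR - 1 + DR ^ 2 * (2 * volR + 1))) * Rf G dd f
        ≤ Rf G' dd f) ∧
      ((1 + 2 / volR) * (1 / 4) * Rf G dd f ≤ Rf G' dd f) := by
    rintro f ⟨u₀, v₀, hne⟩
    set pd : ℝ := ∑ u, ∑ v, dd (f u) (f v) ^ 2 * (gdeg G u : ℝ) * (gdeg G v : ℝ) with hpd_def
    set pd' : ℝ := ∑ u, ∑ v, dd (f u) (f v) ^ 2 * (gdeg G' u : ℝ) * (gdeg G' v : ℝ) with hpd'_def
    set se : ℝ := ∑ u, ∑ v, if G.Adj u v then dd (f u) (f v) ^ 2 else 0 with hse_def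
    set se' : ℝ := ∑ u, ∑ v, if G'.Adj u v then dd (f u) (f v) ^ 2 else 0 with hse'_def
    set Qa : ℝ := ∑ u, dd (f u) (f a) ^ 2 * (gdeg G u : ℝ) with hQa_def
    set Qb : ℝ := ∑ u, dd (f u) (f b) ^ 2 * (gdeg G u : ℝ) with hQb_def
    set dab2 : ℝ := dd (f a) (f b) ^ 2 with hdab2_def
    clear_value pd pd' se se' Qa Qb dab2
    have hF0 : ∀ u v, 0 ≤ dd (f u) (f v) ^ 2 * (gdeg G u : ℝ) * (gdeg G v : ℝ) := by
      intro u v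
      have := hdegR0 u
      have := hdegR0 v
      positivity
    have hQa0 : 0 ≤ Qa := by
      rw [hQa_def]
      refine Finset.sum_nonneg fun u _ => ?_
      have := hdegR0 u
      positivity
    have hQb0 : 0 ≤ Qb := by
      rw [hQb_def]
      refine Finset.sum_nonneg fun u _ => ?_
      have := hdegR0 u
      positivity
    have hdab0 : 0 ≤ dab2 := by rw [hdab2_def]; positivity
    have hdab_le : dab2 ≤ DR ^ 2 := by
      rw [hdab2_def]
      exact pow_le_pow_left₀ (dd_nonneg _ _) (dd_le _ _) 2
    -- se' = se + 2 dab2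
    have hse'_eq : se' = se + 2 * dab2 := by
      have hsplit : ∀ u v : V, (if G'.Adj u v then dd (f u) (f v) ^ 2 else 0)
          = (if G.Adj u v then dd (f u) (f v) ^ 2 else 0)
            + ((if u = a ∧ v = b then dd (f a) (f b) ^ 2 else 0)
            + (if u = b ∧ v = a then dd (f b) (f a) ^ 2 else 0)) := by
        intro u v
        by_cases h1 : G.Adj u v
        · have h2 : ¬(u = a ∧ v = b) := fun h => hnadj (h.1 ▸ h.2 ▸ h1)
          have h3 : ¬(u = b ∧ v = a) := fun h => hnadj (h.1 ▸ h.2 ▸ h1).symm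
          have h4 : G'.Adj u v := (hG'adj u v).mpr (Or.inl h1)
          rw [if_pos h4, if_pos h1, if_neg h2, if_neg h3]
          ring
        · by_cases h2 : u = a ∧ v = b
          · have h3 : ¬(u = b ∧ v = a) := fun h => hab (h2.1.symm.trans h.1)
            have h4 : G'.Adj u v := (hG'adj u v).mpr (Or.inr (Or.inl h2))
            rw [if_pos h4, if_neg h1, if_pos h2, if_neg h3, h2.1, h2.2]
            ring
          · by_cases h3 : u = b ∧ v = a
            · have h4 : G'.Adj u v := (hG'adj u v).mpr (Or.inr (Or.inr h3))
              rw [if_pos h4, if_neg h1, if_neg h2, if_pos h3, h3.1, h3.2]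
              ring
            · have h4 : ¬ G'.Adj u v := fun hadj => by
                rcases (hG'adj u v).mp hadj with h | h | h
                exacts [h1 h, h2 h, h3 h]
              rw [if_neg h4, if_neg h1, if_neg h2, if_neg h3]
              ring
      calc se' = ∑ u, ∑ v, ((if G.Adj u v then dd (f u) (f v) ^ 2 else 0)
            + ((if u = a ∧ v = b then dd (f a) (f b) ^ 2 else 0)
            + (if u = b ∧ v = a then dd (f b) (f a) ^ 2 else 0))) := by
            rw [hse'_def]
            exact Finset.sum_congr rfl fun u _ => Finset.sum_congr rfl fun v _ => hsplit u v
        _ = se + ((∑ u, ∑ v, if u = a ∧ v = b then dd (f a) (f b) ^ 2 else 0)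
            + (∑ u, ∑ v, if u = b ∧ v = a then dd (f b) (f a) ^ 2 else 0)) := by
            simp only [Finset.sum_add_distrib]
            rw [hse_def]
        _ = se + 2 * dab2 := by
            rw [aux_double_sum_pair (fun _ _ => dd (f a) (f b) ^ 2) a b,
              aux_double_sum_pair (fun _ _ => dd (f b) (f a) ^ 2) b a,
              dd_symm (f b) (f a), hdab2_def]
            ring
    -- pd' = pd + 2Qa + 2Qb + 2dab2
    have hpd'_eq : pd' = pd + (2 * Qa + 2 * Qb + 2 * dab2) := by
      have hpt : ∀ u v : V, dd (f u) (f v) ^ 2 * (gdeg G' u : ℝ) * (gdeg G' v : ℝ)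
          = dd (f u) (f v) ^ 2 * (gdeg G u : ℝ) * (gdeg G v : ℝ)
            + (((if v = a then dd (f u) (f a) ^ 2 * (gdeg G u : ℝ) else 0)
            + (if v = b then dd (f u) (f b) ^ 2 * (gdeg G u : ℝ) else 0))
            + ((if u = a then dd (f a) (f v) ^ 2 * (gdeg G v : ℝ) else 0)
            + (if u = b then dd (f b) (f v) ^ 2 * (gdeg G v : ℝ) else 0)))
            + (((if u = a ∧ v = a then dd (f a) (f a) ^ 2 else 0)
            + (if u = a ∧ v = b then dd (f a) (f b) ^ 2 else 0))
            + ((if u = b ∧ v = a then dd (f b) (f a) ^ 2 else 0)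
            + (if u = b ∧ v = b then dd (f b) (f b) ^ 2 else 0))) := by
        intro u v
        rw [hdegR' u, hdegR' v]
        by_cases hua : u = a <;> by_cases hub : u = b <;>
          by_cases hva : v = a <;> by_cases hvb : v = b <;>
          first
            | exact absurd (hua.symm.trans hub) hab
            | exact absurd (hva.symm.trans hvb) hab
            | (simp only [hua, hub, hva, hvb, hab, Ne.symm hab, if_true, if_false,
                eq_self_iff_true, and_true, true_and, and_false, false_and, and_self]
               try ring)
      calc pd' = ∑ u, ∑ v, (dd (f u) (f v) ^ 2 * (gdeg G u : ℝ) * (gdeg G v : ℝ)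
            + (((if v = a then dd (f u) (f a) ^ 2 * (gdeg G u : ℝ) else 0)
            + (if v = b then dd (f u) (f b) ^ 2 * (gdeg G u : ℝ) else 0))
            + ((if u = a then dd (f a) (f v) ^ 2 * (gdeg G v : ℝ) else 0)
            + (if u = b then dd (f b) (f v) ^ 2 * (gdeg G v : ℝ) else 0)))
            + (((if u = a ∧ v = a then dd (f a) (f a) ^ 2 else 0)
            + (if u = a ∧ v = b then dd (f a) (f b) ^ 2 else 0))
            + ((if u = b ∧ v = a then dd (f b) (f a) ^ 2 else 0)
            + (if u = b ∧ v = b then dd (f b) (f b) ^ 2 else 0)))) := by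
            rw [hpd'_def]
            exact Finset.sum_congr rfl fun u _ => Finset.sum_congr rfl fun v _ => hpt u v
        _ = pd + (((∑ u, ∑ v : V, if v = a then dd (f u) (f a) ^ 2 * (gdeg G u : ℝ) else 0)
            + (∑ u, ∑ v : V, if v = b then dd (f u) (f b) ^ 2 * (gdeg G u : ℝ) else 0))
            + ((∑ u : V, ∑ v, if u = a then dd (f a) (f v) ^ 2 * (gdeg G v : ℝ) else 0)
            + (∑ u : V, ∑ v, if u = b then dd (f b) (f v) ^ 2 * (gdeg G v : ℝ) else 0)))
            + (((∑ u, ∑ v, if u = a ∧ v = a then dd (f a) (f a) ^ 2 else 0)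
            + (∑ u, ∑ v, if u = a ∧ v = b then dd (f a) (f b) ^ 2 else 0))
            + ((∑ u, ∑ v, if u = b ∧ v = a then dd (f b) (f a) ^ 2 else 0)
            + (∑ u, ∑ v, if u = b ∧ v = b then dd (f b) (f b) ^ 2 else 0))) := by
            simp only [Finset.sum_add_distrib]
            rw [hpd_def]
        _ = pd + (2 * Qa + 2 * Qb + 2 * dab2) := by
            rw [aux_dsumR (fun u => dd (f u) (f a) ^ 2 * (gdeg G u : ℝ)) a,
              aux_dsumR (fun u => dd (f u) (f b) ^ 2 * (gdeg G u : ℝ)) b,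
              aux_dsumL (fun v => dd (f a) (f v) ^ 2 * (gdeg G v : ℝ)) a,
              aux_dsumL (fun v => dd (f b) (f v) ^ 2 * (gdeg G v : ℝ)) b,
              aux_double_sum_pair (fun _ _ => dd (f a) (f a) ^ 2) a a,
              aux_double_sum_pair (fun _ _ => dd (f a) (f b) ^ 2) a b,
              aux_double_sum_pair (fun _ _ => dd (f b) (f a) ^ 2) b a,
              aux_double_sum_pair (fun _ _ => dd (f b) (f b) ^ 2) b b]
            have e1 : (∑ v, dd (f a) (f v) ^ 2 * (gdeg G v : ℝ)) = Qa := by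
              rw [hQa_def]
              exact Finset.sum_congr rfl fun v _ => by rw [dd_symm (f a) (f v)]
            have e2 : (∑ v, dd (f b) (f v) ^ 2 * (gdeg G v : ℝ)) = Qb := by
              rw [hQb_def]
              exact Finset.sum_congr rfl fun v _ => by rw [dd_symm (f b) (f v)]
            rw [e1, e2, dd_self (f a), dd_self (f b), dd_symm (f b) (f a), ← hdab2_def,
              ← hQa_def, ← hQb_def]
            ring
    -- Qa, Qb ≤ DR^2 (volR - 1)
    have hQ_le : ∀ (c : V), (∑ u, dd (f u) (f c) ^ 2 * (gdeg G u : ℝ)) ≤ DR ^ 2 * (volR - 1) := by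
      intro c
      have step1 : (∑ u, dd (f u) (f c) ^ 2 * (gdeg G u : ℝ))
          ≤ ∑ u, (if u = c then 0 else DR ^ 2 * (gdeg G u : ℝ)) := by
        refine Finset.sum_le_sum fun u _ => ?_
        by_cases h : u = c
        · simp [h, dd_self]
        · rw [if_neg h]
          have h1 := dd_le (f u) (f c)
          have h2 := dd_nonneg (f u) (f c)
          have h3 := hdegR0 u
          exact mul_le_mul_of_nonneg_right (pow_le_pow_left₀ h2 h1 2) h3
      have step2 : (∑ u, (if u = c then 0 else DR ^ 2 * (gdeg G u : ℝ)))
          = DR ^ 2 * volR - DR ^ 2 * (gdeg G c : ℝ) := by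
        have hpt2 : ∀ u, (if u = c then (0:ℝ) else DR ^ 2 * (gdeg G u : ℝ))
            = DR ^ 2 * (gdeg G u : ℝ) - (if u = c then DR ^ 2 * (gdeg G u : ℝ) else 0) := by
          intro u
          by_cases h : u = c <;> simp [h]
        rw [Finset.sum_congr rfl fun u _ => hpt2 u, Finset.sum_sub_distrib,
          Fintype.sum_ite_eq', ← Finset.mul_sum, ← hvolsum]
      have h4 := hdegR c
      nlinarith [mul_le_mul_of_nonneg_left (hdegR c) hDR2]
    have hQa_le : Qa ≤ DR ^ 2 * (volR - 1) := by rw [hQa_def]; exact hQ_le a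
    have hQb_le : Qb ≤ DR ^ 2 * (volR - 1) := by rw [hQb_def]; exact hQ_le b
    -- 2 Qc ≤ pd
    have h2Q : ∀ (c : V), (∑ u, dd (f u) (f c) ^ 2 * (gdeg G u : ℝ)) * 2 ≤ pd := by
      intro c
      have hrow : (∑ v, dd (f c) (f v) ^ 2 * (gdeg G c : ℝ) * (gdeg G v : ℝ))
          = (gdeg G c : ℝ) * ∑ u, dd (f u) (f c) ^ 2 * (gdeg G u : ℝ) := by
        rw [Finset.mul_sum]
        refine Finset.sum_congr rfl fun v _ => ?_
        rw [dd_symm (f c) (f v)]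
        ring
      have hcol : (∑ u, dd (f u) (f c) ^ 2 * (gdeg G u : ℝ) * (gdeg G c : ℝ))
          = (gdeg G c : ℝ) * ∑ u, dd (f u) (f c) ^ 2 * (gdeg G u : ℝ) := by
        rw [Finset.mul_sum]
        refine Finset.sum_congr rfl fun u _ => ?_
        ring
      have hsplit2 : pd = (∑ v, dd (f c) (f v) ^ 2 * (gdeg G c : ℝ) * (gdeg G v : ℝ))
          + ∑ u ∈ Finset.univ.erase c, ∑ v, dd (f u) (f v) ^ 2 * (gdeg G u : ℝ) * (gdeg G v : ℝ) := by
        rw [hpd_def, ← Finset.add_sum_erase _ _ (Finset.mem_univ c)]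
      have hinner : ∀ u, dd (f u) (f c) ^ 2 * (gdeg G u : ℝ) * (gdeg G c : ℝ)
          ≤ ∑ v, dd (f u) (f v) ^ 2 * (gdeg G u : ℝ) * (gdeg G v : ℝ) := fun u =>
        Finset.single_le_sum (fun v _ => hF0 u v) (Finset.mem_univ c)
      have herase : (∑ u ∈ Finset.univ.erase c, dd (f u) (f c) ^ 2 * (gdeg G u : ℝ) * (gdeg G c : ℝ))
          = ∑ u, dd (f u) (f c) ^ 2 * (gdeg G u : ℝ) * (gdeg G c : ℝ) :=
        Finset.sum_erase _ (by simp [dd_self])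
      have hbig : (gdeg G c : ℝ) * (∑ u, dd (f u) (f c) ^ 2 * (gdeg G u : ℝ))
          + (gdeg G c : ℝ) * (∑ u, dd (f u) (f c) ^ 2 * (gdeg G u : ℝ)) ≤ pd := by
        have hb1 : (∑ u ∈ Finset.univ.erase c, dd (f u) (f c) ^ 2 * (gdeg G u : ℝ) * (gdeg G c : ℝ))
            ≤ ∑ u ∈ Finset.univ.erase c, ∑ v, dd (f u) (f v) ^ 2 * (gdeg G u : ℝ) * (gdeg G v : ℝ) :=
          Finset.sum_le_sum fun u _ => hinner u
        rw [herase, hcol] at hb1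
        rw [hsplit2]
        linarith [hb1, hrow]
      have hQ0 : 0 ≤ (∑ u, dd (f u) (f c) ^ 2 * (gdeg G u : ℝ)) := by
        refine Finset.sum_nonneg fun u _ => ?_
        have := hdegR0 u
        positivity
      nlinarith [mul_nonneg (sub_nonneg.mpr (hdegR c)) hQ0]
    have h2Qa : 2 * Qa ≤ pd := by
      have := h2Q a
      rw [← hQa_def] at this
      linarith
    have h2Qb : 2 * Qb ≤ pd := by
      have := h2Q b
      rw [← hQb_def] at this
      linarith
    -- 2 dab2 ≤ pd
    have h2dab : 2 * dab2 ≤ pd := by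
      have h : dd (f a) (f b) ^ 2 * (gdeg G a : ℝ) * (gdeg G b : ℝ)
          + dd (f b) (f a) ^ 2 * (gdeg G b : ℝ) * (gdeg G a : ℝ) ≤ pd := by
        rw [hpd_def]
        exact aux_two_terms_le hF0 hab
      rw [dd_symm (f b) (f a)] at h
      have hX : (0:ℝ) ≤ dd (f a) (f b) ^ 2 := by positivity
      have ha1 := hdegR a
      have hb1 := hdegR b
      rw [hdab2_def]
      nlinarith [mul_nonneg (mul_nonneg hX (sub_nonneg.mpr (hdegR a))) (hdegR0 b),
        mul_nonneg hX (sub_nonneg.mpr (hdegR b))]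
    -- pd ≥ 2 (volR - 1)
    have hpd_lb : 2 * (volR - 1) ≤ pd := by
      set gg : V → ℝ := fun u => if f u = f u₀ then (gdeg G u : ℝ) else 0 with hgg_def
      set hh : V → ℝ := fun u => if f u = f u₀ then 0 else (gdeg G u : ℝ) with hhh_def
      have hgh : ∀ u v, gg u * hh v + hh u * gg v
          ≤ dd (f u) (f v) ^ 2 * (gdeg G u : ℝ) * (gdeg G v : ℝ) := by
        intro u v
        by_cases hu : f u = f u₀ <;> by_cases hv : f v = f u₀ <;>
          simp only [hgg_def, hhh_def, hu, hv, if_true, if_false, eq_self_iff_true,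
            mul_zero, zero_mul, add_zero, zero_add] <;>
          first
            | (have h2 := hdegR0 u
               have h3 := hdegR0 v
               positivity)
            | (have h1 := dd_one (f u₀) (f v) (fun q => hv q.symm)
               have h2 := hdegR0 u
               have h3 := hdegR0 v
               have h4 := dd_nonneg (f u₀) (f v)
               have h5 : 1 ≤ dd (f u₀) (f v) ^ 2 := by nlinarith
               nlinarith [mul_le_mul_of_nonneg_right h5 (mul_nonneg h2 h3)])
            | (have h1 := dd_one (f u) (f u₀) hu
               have h2 := hdegR0 u
               have h3 := hdegR0 v
               have h4 := dd_nonneg (f u) (f u₀)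
               have h5 : 1 ≤ dd (f u) (f u₀) ^ 2 := by nlinarith
               nlinarith [mul_le_mul_of_nonneg_right h5 (mul_nonneg h2 h3)])
      have hST : (∑ u, gg u) + (∑ u, hh u) = volR := by
        rw [hvolsum, ← Finset.sum_add_distrib]
        refine Finset.sum_congr rfl fun u _ => ?_
        by_cases h : f u = f u₀ <;> simp [hgg_def, hhh_def, h]
      have hg0 : ∀ u, 0 ≤ gg u := by
        intro u
        rw [hgg_def]
        by_cases h : f u = f u₀ <;> simp [h, hdegR0 u]
      have hh0 : ∀ u, 0 ≤ hh u := by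
        intro u
        rw [hhh_def]
        by_cases h : f u = f u₀ <;> simp [h, hdegR0 u]
      have hS1 : 1 ≤ ∑ u, gg u := by
        have h1 : gg u₀ ≤ ∑ u, gg u :=
          Finset.single_le_sum (fun u _ => hg0 u) (Finset.mem_univ u₀)
        have h2 : gg u₀ = (gdeg G u₀ : ℝ) := by simp [hgg_def]
        have := hdegR u₀
        linarith [h2 ▸ h1]
      have hT1 : 1 ≤ ∑ u, hh u := by
        have h1 : hh v₀ ≤ ∑ u, hh u :=
          Finset.single_le_sum (fun u _ => hh0 u) (Finset.mem_univ v₀)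
        have h2 : hh v₀ = (gdeg G v₀ : ℝ) := by
          have hv' : ¬ (f v₀ = f u₀) := fun q => hne q.symm
          simp [hhh_def, hv']
        have := hdegR v₀
        linarith [h2 ▸ h1]
      have hprod : (∑ u, gg u) * (∑ u, hh u) + (∑ u, hh u) * (∑ u, gg u) ≤ pd := by
        rw [hpd_def]
        calc (∑ u, gg u) * (∑ u, hh u) + (∑ u, hh u) * (∑ u, gg u)
            = ∑ u, ∑ v, (gg u * hh v + hh u * gg v) := by
              rw [Finset.sum_mul_sum, Finset.sum_mul_sum]
              rw [← Finset.sum_add_distrib]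
              exact Finset.sum_congr rfl fun u _ => (Finset.sum_add_distrib).symm
          _ ≤ ∑ u, ∑ v, dd (f u) (f v) ^ 2 * (gdeg G u : ℝ) * (gdeg G v : ℝ) :=
              Finset.sum_le_sum fun u _ => Finset.sum_le_sum fun v _ => hgh u v
      nlinarith [mul_nonneg (sub_nonneg.mpr hS1) (sub_nonneg.mpr hT1)]
    -- se ≥ 2
    have hse2 : 2 ≤ se := by
      obtain ⟨p0⟩ := hG.preconnected u₀ v₀
      obtain ⟨x, y, hxy, hfxy⟩ := aux_exists_adj_ne p0 hne
      have hFse0 : ∀ u v, 0 ≤ (if G.Adj u v then dd (f u) (f v) ^ 2 else 0) := by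
        intro u v
        split
        · positivity
        · exact le_rfl
      have h : (if G.Adj x y then dd (f x) (f y) ^ 2 else 0)
          + (if G.Adj y x then dd (f y) (f x) ^ 2 else 0) ≤ se := by
        rw [hse_def]
        exact aux_two_terms_le hFse0 hxy.ne
      rw [if_pos hxy, if_pos hxy.symm] at h
      have h1 := dd_one _ _ hfxy
      have h2 := dd_one _ _ hfxy.symm
      have h3 := dd_nonneg (f x) (f y)
      have h4 := dd_nonneg (f y) (f x)
      nlinarith
    -- derived facts
    have hpd_pos : 0 < pd := by linarith
    have hpd'_pos : 0 < pd' := by rw [hpd'_eq]; linarith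
    have hpd_le : pd ≤ pd' := by rw [hpd'_eq]; linarith
    have hpd4 : pd' ≤ 4 * pd := by rw [hpd'_eq]; linarith
    have hse0 : 0 ≤ se := by linarith
    have hse_le : se ≤ se' := by rw [hse'_eq]; linarith
    have hse'_le : se' ≤ (1 + DR ^ 2) * se := by
      rw [hse'_eq]
      nlinarith [mul_nonneg hDR2 (by linarith : (0:ℝ) ≤ se - 2)]
    -- Rf normal forms
    have hdenG : (∑ u, ∑ v, if u ≠ v then dd (f u) (f v) ^ 2 * (gdeg G u : ℝ) * (gdeg G v : ℝ) else 0) = pd := by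
      rw [hpd_def]
      refine Finset.sum_congr rfl fun u _ => Finset.sum_congr rfl fun v _ => ?_
      by_cases h : u = v
      · simp [h, dd_self]
      · simp [h]
    have hdenG' : (∑ u, ∑ v, if u ≠ v then dd (f u) (f v) ^ 2 * (gdeg G' u : ℝ) * (gdeg G' v : ℝ) else 0) = pd' := by
      rw [hpd'_def]
      refine Finset.sum_congr rfl fun u _ => Finset.sum_congr rfl fun v _ => ?_
      by_cases h : u = v
      · simp [h, dd_self]
      · simp [h]
    have hRfG : Rf G dd f = volR * se / pd := by
      unfold Rf
      rw [hdenG, ← hvolR, hse_def]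
      exact aux_halves _ _ _ (ne_of_gt hpd_pos)
    have hRfG' : Rf G' dd f = (volR + 2) * se' / pd' := by
      unfold Rf
      rw [hdenG', hvolG', hse'_def]
      exact aux_halves _ _ _ (ne_of_gt hpd'_pos)
    -- the three inequalities
    have hvne : volR ≠ 0 := ne_of_gt hvolRpos
    have hcoef : (0:ℝ) ≤ volR + 2 := by linarith
    refine ⟨?_, ?_, ?_⟩
    · -- upper bound
      rw [hRfG, hRfG']
      have hR : (1 + 2 / volR) * (1 + DR ^ 2) * (volR * se / pd)
          = ((volR + 2) * ((1 + DR ^ 2) * se)) / pd := by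
        field_simp
      rw [hR, div_le_div_iff₀ hpd'_pos hpd_pos]
      have hx1 : (volR + 2) * se' * pd ≤ (volR + 2) * ((1 + DR ^ 2) * se) * pd :=
        mul_le_mul_of_nonneg_right (mul_le_mul_of_nonneg_left hse'_le hcoef) hpd_pos.le
      have hx0 : (0:ℝ) ≤ (volR + 2) * ((1 + DR ^ 2) * se) :=
        mul_nonneg hcoef (mul_nonneg (by nlinarith) hse0)
      have hx2 : (volR + 2) * ((1 + DR ^ 2) * se) * pd ≤ (volR + 2) * ((1 + DR ^ 2) * se) * pd' :=
        mul_le_mul_of_nonneg_left hpd_le hx0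
      linarith
    · -- m1 lower bound
      rw [hRfG, hRfG']
      have hDm_pos : (0:ℝ) < volR - 1 + DR ^ 2 * (2 * volR + 1) := by
        nlinarith [mul_nonneg hDR2 (by linarith : (0:ℝ) ≤ 2 * volR + 1)]
      have hkey_m1 : (volR - 1) * pd' ≤ (volR - 1 + DR ^ 2 * (2 * volR + 1)) * pd := by
        rw [hpd'_eq]
        have e1 : DR ^ 2 * (2 * volR + 1) * (2 * (volR - 1)) ≤ DR ^ 2 * (2 * volR + 1) * pd :=
          mul_le_mul_of_nonneg_left hpd_lb
            (mul_nonneg hDR2 (by linarith : (0:ℝ) ≤ 2 * volR + 1))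
        have e2 : (volR - 1) * Qa ≤ (volR - 1) * (DR ^ 2 * (volR - 1)) :=
          mul_le_mul_of_nonneg_left hQa_le (by linarith : (0:ℝ) ≤ volR - 1)
        have e3 : (volR - 1) * Qb ≤ (volR - 1) * (DR ^ 2 * (volR - 1)) :=
          mul_le_mul_of_nonneg_left hQb_le (by linarith : (0:ℝ) ≤ volR - 1)
        have e4 : (volR - 1) * dab2 ≤ (volR - 1) * DR ^ 2 :=
          mul_le_mul_of_nonneg_left hdab_le (by linarith : (0:ℝ) ≤ volR - 1)
        have e5 : (0:ℝ) ≤ DR ^ 2 * (volR - 1) :=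
          mul_nonneg hDR2 (by linarith : (0:ℝ) ≤ volR - 1)
        nlinarith
      have hL : (1 + 2 / volR) * ((volR - 1) / (volR - 1 + DR ^ 2 * (2 * volR + 1)))
          * (volR * se / pd)
          = ((volR + 2) * ((volR - 1) * se)) / ((volR - 1 + DR ^ 2 * (2 * volR + 1)) * pd) := by
        field_simp
      rw [hL, div_le_div_iff₀ (mul_pos hDm_pos hpd_pos) hpd'_pos]
      have hy0 : (0:ℝ) ≤ (volR + 2) * se := mul_nonneg hcoef hse0
      have hy1 : (volR + 2) * ((volR - 1) * se) * pd' = (volR + 2) * se * ((volR - 1) * pd') := by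
        ring
      have hy2 : (volR + 2) * se * ((volR - 1) * pd')
          ≤ (volR + 2) * se * ((volR - 1 + DR ^ 2 * (2 * volR + 1)) * pd) :=
        mul_le_mul_of_nonneg_left hkey_m1 hy0
      have hy3 : (volR + 2) * se * ((volR - 1 + DR ^ 2 * (2 * volR + 1)) * pd)
          ≤ (volR + 2) * se' * ((volR - 1 + DR ^ 2 * (2 * volR + 1)) * pd) :=
        mul_le_mul_of_nonneg_right (mul_le_mul_of_nonneg_left hse_le hcoef)
          (mul_pos hDm_pos hpd_pos).le
      calc (volR + 2) * ((volR - 1) * se) * pd'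
          = (volR + 2) * se * ((volR - 1) * pd') := hy1
        _ ≤ (volR + 2) * se * ((volR - 1 + DR ^ 2 * (2 * volR + 1)) * pd) := hy2
        _ ≤ (volR + 2) * se' * ((volR - 1 + DR ^ 2 * (2 * volR + 1)) * pd) := hy3
    · -- 1/4 lower bound
      rw [hRfG, hRfG']
      have hL : (1 + 2 / volR) * (1 / 4) * (volR * se / pd)
          = ((volR + 2) * se) / (4 * pd) := by
        field_simp
      rw [hL, div_le_div_iff₀ (by linarith : (0:ℝ) < 4 * pd) hpd'_pos]
      have hy0 : (0:ℝ) ≤ (volR + 2) * se := mul_nonneg hcoef hse0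
      have hy2 : (volR + 2) * se * pd' ≤ (volR + 2) * se * (4 * pd) :=
        mul_le_mul_of_nonneg_left hpd4 hy0
      have hy3 : (volR + 2) * se * (4 * pd) ≤ (volR + 2) * se' * (4 * pd) :=
        mul_le_mul_of_nonneg_right (mul_le_mul_of_nonneg_left hse_le hcoef)
          (by linarith : (0:ℝ) ≤ 4 * pd)
      linarith
  -- set-level facts
  have hRf0 : ∀ (K : SimpleGraph V) (f : V → W), 0 ≤ Rf K dd f := by
    intro K f
    unfold Rf
    apply div_nonneg
    · apply mul_nonneg (Nat.cast_nonneg _)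
      apply div_nonneg _ (by norm_num : (0:ℝ) ≤ 2)
      refine Finset.sum_nonneg fun u _ => Finset.sum_nonneg fun v _ => ?_
      split
      · positivity
      · exact le_rfl
    · apply div_nonneg _ (by norm_num : (0:ℝ) ≤ 2)
      refine Finset.sum_nonneg fun u _ => Finset.sum_nonneg fun v _ => ?_
      split
      · have := Nat.cast_nonneg (α := ℝ) (gdeg K u)
        have := Nat.cast_nonneg (α := ℝ) (gdeg K v)
        positivity
      · exact le_rfl
  have hfin : ∀ K : SimpleGraph V,
      {r | ∃ f : V → W, (∃ u v, f u ≠ f v) ∧ r = Rf K dd f}.Finite := by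
    intro K
    apply Set.Finite.subset (Set.finite_range (fun f : V → W => Rf K dd f))
    rintro r ⟨f, -, rfl⟩
    exact ⟨f, rfl⟩
  obtain ⟨w₁, w₂, hw⟩ := Fintype.exists_pair_of_one_lt_card hW
  have hnemp : ∀ K : SimpleGraph V,
      {r | ∃ f : V → W, (∃ u v, f u ≠ f v) ∧ r = Rf K dd f}.Nonempty := by
    intro K
    refine ⟨Rf K dd (fun v => if v = a then w₁ else w₂), ⟨_, ⟨a, b, ?_⟩, rfl⟩⟩
    show (if a = a then w₁ else w₂) ≠ (if b = a then w₁ else w₂)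
    rw [if_pos rfl, if_neg (fun h => hab h.symm : ¬ b = a)]
    exact hw
  have hlamG_mem : lam G dd ∈ {r | ∃ f : V → W, (∃ u v, f u ≠ f v) ∧ r = Rf G dd f} :=
    (hnemp G).csInf_mem (hfin G)
  have hlamG'_mem : lam G' dd ∈ {r | ∃ f : V → W, (∃ u v, f u ≠ f v) ∧ r = Rf G' dd f} :=
    (hnemp G').csInf_mem (hfin G')
  obtain ⟨f₀, hf₀nc, hf₀⟩ := hlamG_mem
  obtain ⟨g₀, hg₀nc, hg₀⟩ := hlamG'_mem
  have hcpos : (0:ℝ) ≤ 1 + 2 / volR := by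
    have h5 := div_pos (by norm_num : (0:ℝ) < 2) hvolRpos
    linarith
  constructor
  · -- upper bound
    have h1 : lam G' dd ≤ Rf G' dd f₀ :=
      csInf_le (hfin G').bddBelow ⟨f₀, hf₀nc, rfl⟩
    have h2 := (key f₀ hf₀nc).1
    rw [← hf₀] at h2
    linarith
  · -- lower bound
    rw [ge_iff_le]
    have h3 : lam G dd ≤ Rf G dd g₀ :=
      csInf_le (hfin G).bddBelow ⟨g₀, hg₀nc, rfl⟩
    have hK := key g₀ hg₀nc
    rcases le_total ((volR - 1) / (volR - 1 + DR ^ 2 * (2 * volR + 1))) (1 / 4 : ℝ) with hmx | hmx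
    · rw [max_eq_right hmx]
      have hc : (0:ℝ) ≤ (1 + 2 / volR) * (1 / 4) :=
        mul_nonneg hcpos (by norm_num)
      have h4 : (1 + 2 / volR) * (1 / 4) * lam G dd
          ≤ (1 + 2 / volR) * (1 / 4) * Rf G dd g₀ :=
        mul_le_mul_of_nonneg_left h3 hc
      rw [hg₀]
      linarith [hK.2.2]
    · rw [max_eq_left hmx]
      have hc : (0:ℝ) ≤ (1 + 2 / volR) * ((volR - 1) / (volR - 1 + DR ^ 2 * (2 * volR + 1))) :=
        mul_nonneg hcpos (le_trans (by norm_num) hmx)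
      have h4 : (1 + 2 / volR) * ((volR - 1) / (volR - 1 + DR ^ 2 * (2 * volR + 1))) * lam G dd
          ≤ (1 + 2 / volR) * ((volR - 1) / (volR - 1 + DR ^ 2 * (2 * volR + 1))) * Rf G dd g₀ :=
        mul_le_mul_of_nonneg_left h3 hc
      rw [hg₀]
      linarith [hK.2.1]
end

section
/- For all integers n ≥ 2 and j ≥ 2, λ(K_{n,j}, K₂) = 1, where K_{n,j} is the complete j-partite graph in which each of the j parts has exactly n vertices (two vertices are adjacent if and only if they lie in different parts), and K₂ is the complete graph on two vertices. -/
open scoped Classical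
open Finset

/-- The complete `j`-partite graph in which each of the `j` parts has exactly `n` vertices:
the vertex `(p, x)` lies in part `p`, and two vertices are adjacent iff they lie in
different parts. -/
def Knj (n j : ℕ) : SimpleGraph (Fin j × Fin n) where
  Adj p q := p.1 ≠ q.1
  symm := ⟨fun _ _ h => Ne.symm h⟩
  loopless := ⟨fun _ h => h rfl⟩

-- Auxiliary lemmas

lemma deg_knj (n j : ℕ) (v : Fin j × Fin n) : gdeg (Knj n j) v = (j-1) * n := by
  have h1 : (Knj n j).neighborSet v = {q : Fin j × Fin n | v.1 ≠ q.1} := rfl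
  rw [gdeg, h1, Set.ncard_eq_toFinset_card']
  have h2 : ({q : Fin j × Fin n | v.1 ≠ q.1}).toFinset
      = (univ.erase v.1) ×ˢ (univ : Finset (Fin n)) := by
    ext q; simp [Finset.mem_erase, ne_comm]
  rw [h2, Finset.card_product, Finset.card_erase_of_mem (mem_univ _)]
  simp

lemma vol_knj (n j : ℕ) : (gvol (Knj n j) : ℝ) = (j*n : ℝ) * (((j-1)*n : ℕ) : ℝ) := by
  have : gvol (Knj n j) = (j * n) * ((j-1) * n) := by
    simp [gvol, deg_knj, Finset.sum_const, Finset.card_univ]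
  rw [this]; push_cast; ring

lemma dist2 (a b : Fin 2) :
    ((⊤ : SimpleGraph (Fin 2)).dist a b : ℝ)^2
      = ((if a = 0 then (0:ℝ) else 1) - (if b = 0 then (0:ℝ) else 1))^2 := by
  by_cases h : a = b
  · simp [h]
  · have : (⊤ : SimpleGraph (Fin 2)).dist a b = 1 :=
      (SimpleGraph.dist_eq_one_iff_adj).mpr (by simpa using h)
    rw [this]
    fin_cases a <;> fin_cases b <;> simp_all

lemma expand_sq {α : Type*} [Fintype α] (g : α → ℝ) (h : ∀ a, g a ^ 2 = g a) :
    ∑ u : α, ∑ v : α, (g u - g v)^2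
      = 2 * ((Fintype.card α) * (∑ v, g v) - (∑ v, g v)^2) := by
  have e : ∀ u v : α, (g u - g v)^2 = g u ^ 2 + g v ^ 2 - 2 * (g u * g v) := by intros; ring
  simp_rw [e, h, Finset.sum_sub_distrib, Finset.sum_add_distrib, Finset.sum_const,
    card_univ, nsmul_eq_mul, ← Finset.mul_sum, ← Finset.sum_mul]
  ring

lemma collapse (n j : ℕ) (g : Fin j × Fin n → ℝ) :
    ∑ u : Fin j × Fin n, ∑ v : Fin j × Fin n, (if u.1 = v.1 then (g u - g v)^2 else 0)
      = ∑ p : Fin j, ∑ x : Fin n, ∑ y : Fin n, (g (p,x) - g (p,y))^2 := by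
  simp_rw [Fintype.sum_prod_type]
  refine Finset.sum_congr rfl fun p _ => Finset.sum_congr rfl fun x _ => ?_
  have h1 : ∀ q : Fin j, ∑ y : Fin n, (if p = q then (g (p,x) - g (q,y))^2 else 0)
      = if p = q then ∑ y : Fin n, (g (p,x) - g (q,y))^2 else 0 := by
    intro q; split <;> simp
  simp_rw [h1, Finset.sum_ite_eq, mem_univ, if_true]

/-- the 0/1 indicator of `f`. -/
noncomputable def gI {n j : ℕ} (f : Fin j × Fin n → Fin 2) (v : Fin j × Fin n) : ℝ :=
  if f v = 0 then 0 else 1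

noncomputable def tI {n j : ℕ} (f : Fin j × Fin n → Fin 2) (p : Fin j) : ℝ :=
  ∑ x, gI f (p, x)

noncomputable def SI {n j : ℕ} (f : Fin j × Fin n → Fin 2) : ℝ := ∑ p, tI f p

noncomputable def TI {n j : ℕ} (f : Fin j × Fin n → Fin 2) : ℝ :=
  ∑ p, ((n:ℝ) * tI f p - (tI f p)^2)

lemma gI_sq {n j : ℕ} (f : Fin j × Fin n → Fin 2) (v : Fin j × Fin n) :
    gI f v ^ 2 = gI f v := by
  unfold gI; split <;> norm_num

lemma sum_gI {n j : ℕ} (f : Fin j × Fin n → Fin 2) :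
    ∑ v, gI f v = SI f := by
  rw [SI]; simp_rw [tI]; rw [Fintype.sum_prod_type]

lemma Rf_eq (n j : ℕ) (f : Fin j × Fin n → Fin 2) :
    Rf (Knj n j) (fun a b : Fin 2 => ((⊤ : SimpleGraph (Fin 2)).dist a b : ℝ)) f
      = ((j*n : ℝ) * (((j-1)*n : ℕ):ℝ) * ((j*n : ℝ) * SI f - SI f ^2 - TI f))
        / ((((j-1)*n : ℕ):ℝ)^2 * ((j*n : ℝ) * SI f - SI f ^2)) := by
  have hd : ∀ u v : Fin j × Fin n,
      ((⊤ : SimpleGraph (Fin 2)).dist (f u) (f v) : ℝ)^2 = (gI f u - gI f v)^2 := by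
    intro u v; rw [dist2]; rfl
  have hM : ∑ u : Fin j × Fin n, ∑ v : Fin j × Fin n, (gI f u - gI f v)^2
      = 2 * ((j*n : ℝ) * SI f - SI f ^ 2) := by
    rw [expand_sq _ (gI_sq f), sum_gI]
    simp [Fintype.card_prod]
  have hW : ∑ u : Fin j × Fin n, ∑ v : Fin j × Fin n,
        (if u.1 = v.1 then (gI f u - gI f v)^2 else 0) = 2 * TI f := by
    rw [collapse]
    rw [TI, Finset.mul_sum]
    refine Finset.sum_congr rfl fun p _ => ?_
    have := expand_sq (fun x : Fin n => gI f (p, x)) (fun x => gI_sq f (p,x))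
    rw [this]
    simp [tI]
  have hNum : ∑ u : Fin j × Fin n, ∑ v : Fin j × Fin n,
        (if (Knj n j).Adj u v then ((⊤ : SimpleGraph (Fin 2)).dist (f u) (f v) : ℝ)^2 else 0)
      = 2 * ((j*n : ℝ) * SI f - SI f ^ 2) - 2 * TI f := by
    rw [← hM, ← hW, ← Finset.sum_sub_distrib]
    refine Finset.sum_congr rfl fun u _ => ?_
    rw [← Finset.sum_sub_distrib]
    refine Finset.sum_congr rfl fun v _ => ?_
    rw [hd]
    by_cases h : u.1 = v.1
    · have : ¬ (Knj n j).Adj u v := by simp [Knj, h]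
      simp [this, h]
    · have : (Knj n j).Adj u v := h
      simp [this, h]
  have hDen : ∑ u : Fin j × Fin n, ∑ v : Fin j × Fin n,
        (@ite ℝ (u ≠ v) (@instDecidableNot (u = v) (Classical.propDecidable _))
          (((⊤ : SimpleGraph (Fin 2)).dist (f u) (f v) : ℝ)^2
          * (gdeg (Knj n j) u : ℝ) * (gdeg (Knj n j) v : ℝ)) 0)
      = 2 * ((j*n : ℝ) * SI f - SI f ^ 2) * ((((j-1)*n : ℕ):ℝ) * (((j-1)*n : ℕ):ℝ)) := by
    rw [← hM, Finset.sum_mul]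
    refine Finset.sum_congr rfl fun u _ => ?_
    rw [Finset.sum_mul]
    refine Finset.sum_congr rfl fun v _ => ?_
    rw [hd, deg_knj, deg_knj]
    by_cases h : u = v
    · subst h; rw [if_neg (fun hne => hne rfl)]; simp
    · rw [if_pos h]; ring
  rw [Rf, hNum, hDen, vol_knj]
  congr 1 <;> ring

lemma M_pos (n j : ℕ) (f : Fin j × Fin n → Fin 2) (hf : ∃ u v, f u ≠ f v) :
    0 < (j*n : ℝ) * SI f - SI f ^ 2 := by
  obtain ⟨u₀, v₀, hne⟩ := hf
  have h1 : gI f u₀ ≠ gI f v₀ := by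
    revert hne; unfold gI
    generalize f u₀ = a; generalize f v₀ = b
    fin_cases a <;> fin_cases b <;> simp
  have h2 : 0 < (gI f u₀ - gI f v₀)^2 := by
    have h' := sub_ne_zero.mpr h1; positivity
  have h3 : 0 < ∑ u : Fin j × Fin n, ∑ v : Fin j × Fin n, (gI f u - gI f v)^2 := by
    refine Finset.sum_pos' (fun u _ => Finset.sum_nonneg fun v _ => sq_nonneg _)
      ⟨u₀, mem_univ _, Finset.sum_pos' (fun v _ => sq_nonneg _) ⟨v₀, mem_univ _, h2⟩⟩
  have hM : ∑ u : Fin j × Fin n, ∑ v : Fin j × Fin n, (gI f u - gI f v)^2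
      = 2 * ((j*n : ℝ) * SI f - SI f ^ 2) := by
    rw [expand_sq _ (gI_sq f), sum_gI]
    simp [Fintype.card_prod]
  rw [hM] at h3; linarith

lemma jT_le (n j : ℕ) (f : Fin j × Fin n → Fin 2) :
    (j : ℝ) * TI f ≤ (j*n : ℝ) * SI f - SI f ^ 2 := by
  have hCS : SI f ^ 2 ≤ (j : ℝ) * ∑ p, (tI f p)^2 := by
    have := sq_sum_le_card_mul_sum_sq (s := (univ : Finset (Fin j))) (f := tI f)
    simpa [SI] using this
  have hT : TI f = (n : ℝ) * SI f - ∑ p, (tI f p)^2 := by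
    rw [TI, SI, Finset.sum_sub_distrib, ← Finset.mul_sum]
  rw [hT]; nlinarith

/-- For all integers `n ≥ 2` and `j ≥ 2`, `λ(K_{n,j}, K₂) = 1`, where
`K_{n,j}` is the complete `j`-partite graph with all parts of size `n`. -/
theorem stmt_16 (n j : ℕ) (hn : 2 ≤ n) (hj : 2 ≤ j) :
    lam (Knj n j) (fun a b : Fin 2 => ((⊤ : SimpleGraph (Fin 2)).dist a b : ℝ)) = 1 := by
  haveI : NeZero n := ⟨by omega⟩
  haveI : NeZero j := ⟨by omega⟩
  have hn' : (2:ℝ) ≤ n := by exact_mod_cast hn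
  have hj' : (2:ℝ) ≤ j := by exact_mod_cast hj
  have hDcast : (((j-1)*n : ℕ):ℝ) = ((j:ℝ)-1)*n := by
    rw [Nat.cast_mul, Nat.cast_sub (by omega), Nat.cast_one]
  -- lower bound : every element of the set is ≥ 1
  have hub : ∀ r ∈ {r | ∃ f : Fin j × Fin n → Fin 2, (∃ u v, f u ≠ f v) ∧
      r = Rf (Knj n j) (fun a b : Fin 2 => ((⊤ : SimpleGraph (Fin 2)).dist a b : ℝ)) f},
      (1:ℝ) ≤ r := by
    rintro r ⟨f, hf, rfl⟩
    rw [Rf_eq]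
    set S := SI f
    set T := TI f
    have hA : 0 < (j*n : ℝ) * S - S ^ 2 := M_pos n j f hf
    have hjT : (j : ℝ) * T ≤ (j*n : ℝ) * S - S ^ 2 := jT_le n j f
    rw [hDcast]
    set A := (j*n : ℝ) * S - S ^ 2
    have hDpos : (0:ℝ) < ((j:ℝ)-1)*n := by nlinarith
    rw [le_div_iff₀ (by positivity)]
    have key : (0:ℝ) ≤ ((j:ℝ)-1) * (n*n) * (A - j*T) := by
      apply mul_nonneg (by nlinarith) (by linarith)
    nlinarith [key]
  -- the witness
  set f₀ : Fin j × Fin n → Fin 2 := fun v => if v.2 = 0 then 0 else 1 with hf₀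
  have hnc : ∃ u v : Fin j × Fin n, f₀ u ≠ f₀ v := by
    refine ⟨(0, 0), (0, 1), ?_⟩
    have h10 : (1 : Fin n) ≠ 0 := by
      simp [Fin.ext_iff, Nat.mod_eq_of_lt (by omega : 1 < n)]
    simp [hf₀, h10]
  have htp : ∀ p : Fin j, tI f₀ p = (n : ℝ) - 1 := by
    intro p
    have h1 : ∀ x : Fin n, gI f₀ (p, x) = 1 - (if x = (0:Fin n) then (1:ℝ) else 0) := by
      intro x
      by_cases h : x = 0 <;> simp [gI, hf₀, h]
    rw [tI]
    simp_rw [h1]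
    rw [Finset.sum_sub_distrib, Finset.sum_const, card_univ]
    simp
  have hS : SI f₀ = (j:ℝ) * ((n:ℝ)-1) := by
    rw [SI]; simp_rw [htp]; rw [Finset.sum_const, card_univ]; simp
  have hT : TI f₀ = (j:ℝ) * ((n:ℝ) * ((n:ℝ)-1) - ((n:ℝ)-1)^2) := by
    rw [TI]; simp_rw [htp]; rw [Finset.sum_const, card_univ]; simp
  have hW : Rf (Knj n j) (fun a b : Fin 2 => ((⊤ : SimpleGraph (Fin 2)).dist a b : ℝ)) f₀ = 1 := by
    rw [Rf_eq, hS, hT, hDcast]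
    rw [div_eq_one_iff_eq]
    · ring
    · have key : (((j:ℝ)-1)*n)^2 * ((j*n:ℝ) * ((j:ℝ)*((n:ℝ)-1)) - ((j:ℝ)*((n:ℝ)-1))^2)
          = ((((j:ℝ)-1))*n*(j:ℝ))^2*((n:ℝ)-1) := by ring
      rw [key]
      have h1 : (0:ℝ) < (((j:ℝ)-1))*n*(j:ℝ) := by nlinarith
      have h2 : (0:ℝ) < (n:ℝ)-1 := by linarith
      positivity
  have hmem : (1:ℝ) ∈ {r | ∃ f : Fin j × Fin n → Fin 2, (∃ u v, f u ≠ f v) ∧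
      r = Rf (Knj n j) (fun a b : Fin 2 => ((⊤ : SimpleGraph (Fin 2)).dist a b : ℝ)) f} :=
    ⟨f₀, hnc, hW.symm⟩
  exact le_antisymm (csInf_le ⟨1, hub⟩ hmem) (le_csInf ⟨1, hmem⟩ hub)
end

section
/- For all integers n ≥ 2 and k ≥ 2, λ(K_{n,n}, K_k) = 1, where K_{n,n} is the complete bipartite graph with both parts of size n and K_k is the complete graph on k vertices. -/
open scoped Classical
open Finset

lemma aux_distSq {k : ℕ} (a b : Fin k) :
    (((⊤ : SimpleGraph (Fin k)).dist a b : ℝ))^2 = if a = b then 0 else 1 := by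
  by_cases h : a = b
  · simp [h]
  · have : (⊤ : SimpleGraph (Fin k)).dist a b = 1 :=
      SimpleGraph.dist_eq_one_iff_adj.mpr (by simpa using h)
    simp [h, this]

lemma aux_delta_sum {k : ℕ} (a b : Fin k) :
    (if a = b then (1:ℝ) else 0)
      = ∑ i : Fin k, (if a = i then (1:ℝ) else 0) * (if b = i then (1:ℝ) else 0) := by
  simp [ite_mul, Finset.sum_ite_eq, eq_comm]

lemma aux_deg_eq (n : ℕ) (v : Fin n ⊕ Fin n) :
    gdeg (completeBipartiteGraph (Fin n) (Fin n)) v = n := by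
  have h : (completeBipartiteGraph (Fin n) (Fin n)).neighborSet v
      = Set.range (if v.isLeft then Sum.inr else Sum.inl) := by
    ext w
    cases v <;> cases w <;> simp [SimpleGraph.neighborSet]
  rw [gdeg, h]
  cases v <;> simp <;> rw [← Nat.card_coe_set_eq] <;>
    first
      | (rw [Nat.card_range_of_injective Sum.inr_injective]; simp)
      | (rw [Nat.card_range_of_injective Sum.inl_injective]; simp)

/-- number of (ordered) pairs with distinct labels -/
noncomputable def Tq {n k : ℕ} (p q : Fin n → Fin k) : ℝ :=
  ∑ x : Fin n, ∑ y : Fin n, if p x = q y then 0 else 1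

/-- size of the fiber of `p` over `i` -/
noncomputable def cnt {n k : ℕ} (p : Fin n → Fin k) (i : Fin k) : ℝ :=
  ∑ x : Fin n, if p x = i then 1 else 0

lemma aux_Tq_eq {n k : ℕ} (p q : Fin n → Fin k) :
    Tq p q = (n:ℝ) * n - ∑ i : Fin k, cnt p i * cnt q i := by
  have h1 : ∀ a b : Fin k, (if a = b then (0:ℝ) else 1)
      = 1 - ∑ i : Fin k, (if a = i then (1:ℝ) else 0) * (if b = i then (1:ℝ) else 0) := by
    intro a b
    rw [← aux_delta_sum]
    by_cases h : a = b <;> simp [h]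
  have h2 : (∑ x : Fin n, ∑ y : Fin n,
      ∑ i : Fin k, (if p x = i then (1:ℝ) else 0) * (if q y = i then (1:ℝ) else 0))
      = ∑ i : Fin k, cnt p i * cnt q i :=
    calc (∑ x : Fin n, ∑ y : Fin n,
        ∑ i : Fin k, (if p x = i then (1:ℝ) else 0) * (if q y = i then (1:ℝ) else 0))
        = ∑ x : Fin n, ∑ i : Fin k,
            ∑ y : Fin n, (if p x = i then (1:ℝ) else 0) * (if q y = i then (1:ℝ) else 0) :=
          Finset.sum_congr rfl fun x _ => Finset.sum_comm
      _ = ∑ i : Fin k, ∑ x : Fin n,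
            ∑ y : Fin n, (if p x = i then (1:ℝ) else 0) * (if q y = i then (1:ℝ) else 0) :=
          Finset.sum_comm
      _ = ∑ i : Fin k, cnt p i * cnt q i :=
          Finset.sum_congr rfl fun i _ => by
            rw [cnt, cnt, Finset.sum_mul_sum]
  simp only [Tq, h1, Finset.sum_sub_distrib, Finset.sum_const, Finset.card_univ,
    Fintype.card_fin, nsmul_eq_mul, mul_one]
  rw [h2]
  try ring

lemma aux_Tq_nonneg {n k : ℕ} (p q : Fin n → Fin k) : 0 ≤ Tq p q := by
  refine Finset.sum_nonneg fun x _ => Finset.sum_nonneg fun y _ => ?_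
  positivity

lemma aux_Tq_symm {n k : ℕ} (p q : Fin n → Fin k) : Tq p q = Tq q p := by
  simp only [Tq]
  rw [Finset.sum_comm]
  refine Finset.sum_congr rfl fun y _ => Finset.sum_congr rfl fun x _ => ?_
  by_cases h : p x = q y <;> simp [h, eq_comm]

lemma aux_Tq_pos {n k : ℕ} (p q : Fin n → Fin k) (h : ∃ x y, p x ≠ q y) : 0 < Tq p q := by
  obtain ⟨x, y, hxy⟩ := h
  refine Finset.sum_pos'
    (fun x _ => Finset.sum_nonneg fun y _ => by positivity)
    ⟨x, Finset.mem_univ x, Finset.sum_pos'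
      (fun y _ => by positivity) ⟨y, Finset.mem_univ y, by simp [hxy]⟩⟩

lemma aux_key_ineq {n k : ℕ} (g h : Fin n → Fin k) :
    Tq g g + Tq h h ≤ 2 * Tq g h := by
  rw [aux_Tq_eq, aux_Tq_eq, aux_Tq_eq]
  have h0 : (0:ℝ) ≤ ∑ i : Fin k, (cnt g i - cnt h i)^2 :=
    Finset.sum_nonneg fun i _ => sq_nonneg _
  have h1 : ∑ i : Fin k, (cnt g i - cnt h i)^2
      = (∑ i : Fin k, cnt g i * cnt g i) + (∑ i : Fin k, cnt h i * cnt h i)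
        - 2 * ∑ i : Fin k, cnt g i * cnt h i := by
    rw [Finset.sum_congr rfl (fun i _ =>
      show (cnt g i - cnt h i)^2
        = cnt g i * cnt g i + cnt h i * cnt h i - 2 * (cnt g i * cnt h i) by ring)]
    rw [Finset.sum_sub_distrib, Finset.sum_add_distrib, ← Finset.mul_sum]
  rw [h1] at h0
  linarith

lemma aux_pull {c : Prop} [Decidable c] (e a b : ℝ) :
    (if c then e * a * b else 0) = (a * b) * (if c then e else 0) := by
  split_ifs <;> ring

lemma aux_Rf_eq {n k : ℕ} (hn : 0 < n) (f : Fin n ⊕ Fin n → Fin k) :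
    Rf (completeBipartiteGraph (Fin n) (Fin n))
      (fun a b : Fin k => ((⊤ : SimpleGraph (Fin k)).dist a b : ℝ)) f
    = 2 * (Tq (f ∘ Sum.inl) (f ∘ Sum.inr) + Tq (f ∘ Sum.inr) (f ∘ Sum.inl)) /
      (Tq (f ∘ Sum.inl) (f ∘ Sum.inl) + Tq (f ∘ Sum.inr) (f ∘ Sum.inr)
        + (Tq (f ∘ Sum.inl) (f ∘ Sum.inr) + Tq (f ∘ Sum.inr) (f ∘ Sum.inl))) := by
  have hvol : (gvol (completeBipartiteGraph (Fin n) (Fin n)) : ℝ) = 2 * ((n:ℝ) * n) := by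
    rw [gvol]
    push_cast
    rw [Finset.sum_congr rfl (fun v _ => by rw [aux_deg_eq])]
    simp [Finset.card_univ]
    try ring
  have hSE : (∑ u, ∑ v, if (completeBipartiteGraph (Fin n) (Fin n)).Adj u v then
      (((⊤ : SimpleGraph (Fin k)).dist (f u) (f v) : ℝ))^2 else 0)
      = Tq (f ∘ Sum.inl) (f ∘ Sum.inr) + Tq (f ∘ Sum.inr) (f ∘ Sum.inl) := by
    simp only [aux_distSq]
    rw [Fintype.sum_sum_type]
    simp [Fintype.sum_sum_type, Tq, Function.comp]
  rw [Rf, hvol, hSE]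
  set SE := Tq (f ∘ Sum.inl) (f ∘ Sum.inr) + Tq (f ∘ Sum.inr) (f ∘ Sum.inl) with hSEdef
  have halg : ∀ D S : ℝ, D = ((n:ℝ) * n) * S →
      2 * ((n:ℝ) * n) * (SE / 2) / (D / 2) = 2 * SE / S := by
    intro D S hD
    subst hD
    have hn' : ((n:ℝ) * n) ≠ 0 := by positivity
    rw [show 2 * ((n:ℝ) * n) * (SE / 2) = ((n:ℝ) * n) * SE by ring,
        show ((n:ℝ) * n) * S / 2 = ((n:ℝ) * n) * (S / 2) by ring,
        mul_div_mul_left _ _ hn', div_div_eq_mul_div]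
    ring
  apply halg
  -- remaining: the denominator double sum equals (n*n) * (sum of Tq's)
  simp only [aux_distSq, aux_deg_eq, aux_pull]
  simp only [← Finset.mul_sum]
  congr 1
  rw [Fintype.sum_sum_type]
  simp only [Fintype.sum_sum_type, Finset.sum_add_distrib]
  simp only [ne_eq, Sum.inl.injEq, Sum.inr.injEq, reduceCtorEq, not_false_eq_true,
    ite_true, if_true, not_true, not_false_iff]
  have hdrop : ∀ (g : Fin n → Fin k),
      (∑ x : Fin n, ∑ y : Fin n, if ¬ x = y then (if g x = g y then (0:ℝ) else 1) else 0)
      = ∑ x : Fin n, ∑ y : Fin n, (if g x = g y then (0:ℝ) else 1) := by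
    intro g
    refine Finset.sum_congr rfl fun x _ => Finset.sum_congr rfl fun y _ => ?_
    by_cases h : x = y <;> simp [h]
  rw [hdrop (fun a => f (Sum.inl a)), hdrop (fun a => f (Sum.inr a))]
  simp only [hSEdef, Tq, Function.comp]
  ring

/-- For all integers `n ≥ 2` and `k ≥ 2`, `λ(K_{n,n}, K_k) = 1`, where
`K_{n,n}` is the complete bipartite graph with both parts of size `n`. -/
theorem stmt_17 (n k : ℕ) (hn : 2 ≤ n) (hk : 2 ≤ k) :
    lam (completeBipartiteGraph (Fin n) (Fin n))
      (fun a b : Fin k => ((⊤ : SimpleGraph (Fin k)).dist a b : ℝ)) = 1 := by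
  obtain ⟨m, rfl⟩ : ∃ m, n = m + 2 := ⟨n - 2, by omega⟩
  obtain ⟨j, rfl⟩ : ∃ j, k = j + 2 := ⟨k - 2, by omega⟩
  have hnpos : 0 < m + 2 := by omega
  set G := completeBipartiteGraph (Fin (m + 2)) (Fin (m + 2)) with hG
  set d : Fin (j + 2) → Fin (j + 2) → ℝ :=
    fun a b => ((⊤ : SimpleGraph (Fin (j + 2))).dist a b : ℝ) with hd
  set S : Set ℝ := {r | ∃ f : Fin (m + 2) ⊕ Fin (m + 2) → Fin (j + 2),
    (∃ u v, f u ≠ f v) ∧ r = Rf G d f} with hS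
  -- the witness
  set g : Fin (m + 2) → Fin (j + 2) := fun i => if i = 0 then 0 else 1 with hg
  have h10 : (1 : Fin (m + 2)) ≠ 0 := by
    simp [Fin.ext_iff]
  have hg01 : g 0 ≠ g 1 := by
    simp only [hg, if_pos rfl, if_neg h10]
    simp [Fin.ext_iff]
  have hTpos : 0 < Tq g g := aux_Tq_pos g g ⟨0, 1, hg01⟩
  have hmem : (1:ℝ) ∈ S := by
    refine ⟨Sum.elim g g, ⟨Sum.inl 0, Sum.inl 1, hg01⟩, ?_⟩
    rw [aux_Rf_eq hnpos]
    have h1 : (Sum.elim g g ∘ Sum.inl) = g := rfl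
    have h2 : (Sum.elim g g ∘ Sum.inr) = g := rfl
    rw [h1, h2]
    rw [eq_comm, div_eq_one_iff_eq (by linarith)]
    ring
  have hlb : ∀ r ∈ S, (1:ℝ) ≤ r := by
    rintro r ⟨f, ⟨u, v, huv⟩, rfl⟩
    rw [aux_Rf_eq hnpos]
    have n1 := aux_Tq_nonneg (f ∘ Sum.inl) (f ∘ Sum.inl)
    have n2 := aux_Tq_nonneg (f ∘ Sum.inr) (f ∘ Sum.inr)
    have n3 := aux_Tq_nonneg (f ∘ Sum.inl) (f ∘ Sum.inr)
    have n4 := aux_Tq_nonneg (f ∘ Sum.inr) (f ∘ Sum.inl)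
    have hD : 0 < Tq (f ∘ Sum.inl) (f ∘ Sum.inl) + Tq (f ∘ Sum.inr) (f ∘ Sum.inr)
        + (Tq (f ∘ Sum.inl) (f ∘ Sum.inr) + Tq (f ∘ Sum.inr) (f ∘ Sum.inl)) := by
      cases u with
      | inl x => cases v with
        | inl y => have := aux_Tq_pos (f ∘ Sum.inl) (f ∘ Sum.inl) ⟨x, y, huv⟩; linarith
        | inr y => have := aux_Tq_pos (f ∘ Sum.inl) (f ∘ Sum.inr) ⟨x, y, huv⟩; linarith
      | inr x => cases v with
        | inl y => have := aux_Tq_pos (f ∘ Sum.inr) (f ∘ Sum.inl) ⟨x, y, huv⟩; linarith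
        | inr y => have := aux_Tq_pos (f ∘ Sum.inr) (f ∘ Sum.inr) ⟨x, y, huv⟩; linarith
    rw [one_le_div hD]
    have hk := aux_key_ineq (f ∘ Sum.inl) (f ∘ Sum.inr)
    have hsym := aux_Tq_symm (f ∘ Sum.inl) (f ∘ Sum.inr)
    linarith
  rw [lam]
  exact le_antisymm (csInf_le ⟨1, fun r hr => hlb r hr⟩ hmem) (le_csInf ⟨1, hmem⟩ hlb)
end
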